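/- If a nonzero polynomial h ∈ F_q[X,Y] has total degree d < q and ℓ = {(a_1 + b_1 t, a_2 + b_2 t) : t ∈ F_q} is a line (with (b_1,b_2) ≠ (0,0)) such that h(a_1 + b_1 t, a_2 + b_2 t) = 0 for all t ∈ F_q, then the linear polynomial L(X,Y) = b_2(X - a_1) - b_1(Y - a_2) divides h in F_q[X,Y]. -/

import Mathlib

open MvPolynomial

private lemma dvd_sub_aeval {R : Type*} [CommRing R] (v : Fin 2 → MvPolynomial (Fin 2) R)
    (i : Fin 2) (hv : ∀ j, j ≠ i → v j = X j) (p : MvPolynomial (Fin 2) R) :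
    (X i - v i) ∣ p - aeval v p := by
  induction p using MvPolynomial.induction_on with
  | C a => simp
  | add p q hp hq =>
    have := dvd_add hp hq
    rw [sub_add_sub_comm] at this
    simpa [map_add] using this
  | mul_X p j hp =>
    have key : p * X j - aeval v (p * X j)
        = (p - aeval v p) * X j + aeval v p * (X j - v j) := by
      simp only [map_mul, aeval_X]
      ring
    rw [key]
    rcases eq_or_ne j i with rfl | hj
    · exact dvd_add (hp.mul_right _) (Dvd.dvd.mul_left dvd_rfl _)
    · rw [hv j hj]
      simpa using hp.mul_right (X j)

private lemma natDegree_aeval_le' {R : Type*} [CommRing R]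
    (w : Fin 2 → Polynomial R) (hw : ∀ i, (w i).natDegree ≤ 1)
    (p : MvPolynomial (Fin 2) R) :
    (aeval w p).natDegree ≤ p.totalDegree := by
  rw [aeval_def, eval₂_eq]
  refine Polynomial.natDegree_sum_le_of_forall_le _ _ fun d hd => ?_
  refine (Polynomial.natDegree_mul_le).trans ?_
  have h1 : (algebraMap R (Polynomial R) (coeff d p)).natDegree = 0 :=
    Polynomial.natDegree_C _
  rw [h1, zero_add]
  refine (Polynomial.natDegree_prod_le _ _).trans ?_
  calc (∑ i ∈ d.support, ((w i) ^ d i).natDegree)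
      ≤ ∑ i ∈ d.support, d i * 1 := by
        refine Finset.sum_le_sum fun i _ => ?_
        exact (Polynomial.natDegree_pow_le).trans (Nat.mul_le_mul_left _ (hw i))
    _ = ∑ i ∈ d.support, d i := by simp
    _ ≤ p.totalDegree := le_totalDegree hd

private lemma aeval_eq_eval' {F : Type*} [CommSemiring F] (u : Fin 2 → F)
    (p : MvPolynomial (Fin 2) F) : aeval u p = eval u p := by
  rw [aeval_def, Algebra.algebraMap_self]
  rfl

/-- if a nonzero bivariate polynomial `h` of total degree `< q`
vanishes on the whole line `t ↦ (a₁ + b₁ t, a₂ + b₂ t)` (with `(b₁,b₂) ≠ (0,0)`),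
then the linear polynomial `b₂(X - a₁) - b₁(Y - a₂)` divides `h`. -/
theorem stmt_11 (F : Type*) [Field F] [Fintype F] (h : MvPolynomial (Fin 2) F)
    (hne : h ≠ 0) (hdeg : h.totalDegree < Fintype.card F)
    (a₁ a₂ b₁ b₂ : F) (hb : ¬ (b₁ = 0 ∧ b₂ = 0))
    (hvanish : ∀ t : F, eval ![a₁ + b₁ * t, a₂ + b₂ * t] h = 0) :
    (C b₂ * (X 0 - C a₁) - C b₁ * (X 1 - C a₂)) ∣ h := by
  classical
  -- the univariate restriction of `h` to the line is zero
  set w : Fin 2 → Polynomial F :=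
    ![Polynomial.C a₁ + Polynomial.C b₁ * Polynomial.X,
      Polynomial.C a₂ + Polynomial.C b₂ * Polynomial.X] with hw_def
  have hweval : ∀ t : F, (aeval w h).eval t = 0 := by
    intro t
    have h1 : Polynomial.aeval t (aeval w h)
        = aeval (fun i => Polynomial.aeval t (w i)) h := comp_aeval_apply _ _ _
    have h2 : (fun i => Polynomial.aeval t (w i)) = ![a₁ + b₁ * t, a₂ + b₂ * t] := by
      funext i
      fin_cases i <;> simp [hw_def]
    have h3 : Polynomial.aeval t (aeval w h) = (aeval w h).eval t := by
      rw [Polynomial.coe_aeval_eq_eval]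
    rw [← h3, h1, h2, aeval_eq_eval']
    exact hvanish t
  have hr : aeval w h = 0 := by
    refine Polynomial.eq_zero_of_natDegree_lt_card_of_eval_eq_zero _
      (Function.injective_id (α := F)) (fun t => hweval t) ?_
    refine lt_of_le_of_lt ?_ hdeg
    refine natDegree_aeval_le' w (fun i => ?_) h
    fin_cases i <;>
      · simp only [hw_def, Matrix.cons_val_zero, Matrix.cons_val_one, Matrix.head_cons]
        refine (Polynomial.natDegree_add_le _ _).trans (max_le (by simp) ?_)
        exact (Polynomial.natDegree_mul_le).trans (by simp)
  rcases eq_or_ne b₂ 0 with hb2 | hb2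
  · -- b₂ = 0, so b₁ ≠ 0 and the line is `Y = a₂`
    have hb1 : b₁ ≠ 0 := fun hb1 => hb ⟨hb1, hb2⟩
    subst hb2
    have hinv : (C b₁ : MvPolynomial (Fin 2) F) * C b₁⁻¹ = 1 := by
      rw [← C_mul, mul_inv_cancel₀ hb1, C_1]
    set v : Fin 2 → MvPolynomial (Fin 2) F := ![X 0, C a₂] with hv_def
    have hv : ∀ j, j ≠ (1 : Fin 2) → v j = X j := by
      intro j hj
      fin_cases j
      · rfl
      · exact absurd rfl hj
    have hqr : aeval v h
        = Polynomial.aeval ((X 0 - C a₁) * C b₁⁻¹ : MvPolynomial (Fin 2) F) (aeval w h) := by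
      rw [comp_aeval_apply]
      have hfun : v = fun i => Polynomial.aeval ((X 0 - C a₁) * C b₁⁻¹ : MvPolynomial (Fin 2) F) (w i) := by
        funext i
        fin_cases i
        · show v 0 = Polynomial.aeval ((X 0 - C a₁) * C b₁⁻¹ : MvPolynomial (Fin 2) F) (w 0)
          simp only [hv_def, hw_def, Matrix.cons_val_zero, map_add, map_mul,
            Polynomial.aeval_C, Polynomial.aeval_X, algebraMap_eq]
          linear_combination (C a₁ - X (0 : Fin 2)) * hinv
        · show v 1 = Polynomial.aeval ((X 0 - C a₁) * C b₁⁻¹ : MvPolynomial (Fin 2) F) (w 1)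
          simp [hv_def, hw_def]
      rw [← hfun]
    have hdvd := dvd_sub_aeval v 1 hv h
    rw [hqr, hr, map_zero, sub_zero] at hdvd
    have hv1 : v 1 = C a₂ := rfl
    rw [hv1] at hdvd
    have hL : (C (0:F) * (X 0 - C a₁) - C b₁ * (X 1 - C a₂) : MvPolynomial (Fin 2) F)
        = -C b₁ * (X 1 - C a₂) := by
      simp
    rw [hL]
    have hu : IsUnit (-C b₁ : MvPolynomial (Fin 2) F) := by
      refine IsUnit.neg (IsUnit.of_mul_eq_one _ hinv)
    exact hu.mul_left_dvd.2 hdvd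
  · -- b₂ ≠ 0: solve for X in terms of Y
    have hinv : (C b₂ : MvPolynomial (Fin 2) F) * C b₂⁻¹ = 1 := by
      rw [← C_mul, mul_inv_cancel₀ hb2, C_1]
    set v : Fin 2 → MvPolynomial (Fin 2) F :=
      ![C (b₁ * b₂⁻¹) * X 1 + C (a₁ - b₁ * b₂⁻¹ * a₂), X 1] with hv_def
    have hv : ∀ j, j ≠ (0 : Fin 2) → v j = X j := by
      intro j hj
      fin_cases j
      · exact absurd rfl hj
      · rfl
    have hqr : aeval v h
        = Polynomial.aeval ((X 1 - C a₂) * C b₂⁻¹ : MvPolynomial (Fin 2) F) (aeval w h) := by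
      rw [comp_aeval_apply]
      have hfun : v = fun i => Polynomial.aeval ((X 1 - C a₂) * C b₂⁻¹ : MvPolynomial (Fin 2) F) (w i) := by
        funext i
        fin_cases i
        · show v 0 = Polynomial.aeval ((X 1 - C a₂) * C b₂⁻¹ : MvPolynomial (Fin 2) F) (w 0)
          simp only [hv_def, hw_def, Matrix.cons_val_zero, map_add, map_mul,
            Polynomial.aeval_C, Polynomial.aeval_X, algebraMap_eq, C_sub, C_mul]
          ring
        · show v 1 = Polynomial.aeval ((X 1 - C a₂) * C b₂⁻¹ : MvPolynomial (Fin 2) F) (w 1)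
          simp only [hv_def, hw_def, Matrix.cons_val_one, Matrix.head_cons, Matrix.cons_val_zero, map_add, map_mul,
            Polynomial.aeval_C, Polynomial.aeval_X, algebraMap_eq]
          linear_combination (C a₂ - X (1 : Fin 2)) * hinv
      rw [← hfun]
    have hdvd := dvd_sub_aeval v 0 hv h
    rw [hqr, hr, map_zero, sub_zero] at hdvd
    have hv0 : v 0 = C (b₁ * b₂⁻¹) * X 1 + C (a₁ - b₁ * b₂⁻¹ * a₂) := rfl
    rw [hv0] at hdvd
    have hL : (C b₂ * (X 0 - C a₁) - C b₁ * (X 1 - C a₂) : MvPolynomial (Fin 2) F)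
        = C b₂ * (X 0 - (C (b₁ * b₂⁻¹) * X 1 + C (a₁ - b₁ * b₂⁻¹ * a₂))) := by
      simp only [C_sub, C_mul]
      linear_combination C b₁ * (X (1 : Fin 2) - C a₂) * hinv
    rw [hL]
    have hu : IsUnit (C b₂ : MvPolynomial (Fin 2) F) := IsUnit.of_mul_eq_one _ hinv
    exact hu.mul_left_dvd.2 hdvd
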